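/- Let γₙ : [0,1] → ℂ be continuous curves converging uniformly to γ : [0,1] → ℂ, σₙ → σ in [0,1], and ℓ ⊆ ℂ closed with γ(σ) ∉ ℓ. Define λ = inf{t ≥ σ : γ(t) ∈ ℓ} and λₙ = inf{t ≥ σₙ : γₙ(t) ∈ ℓ}. Then liminf_{n→∞} λₙ ≥ λ. -/
import Mathlib


open Set Filter

/-- Lower semicontinuity of hitting times: if continuous curves `γₙ` converge uniformly to `γ`,
`σₙ → σ`, and `ℓ` is closed with `γ(σ) ∉ ℓ`, then with hitting times defined with the
convention `inf ∅ = 1`, `liminf λₙ ≥ λ`. -/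
theorem hitting_time_liminf_ge (γₙ : ℕ → ℝ → ℂ) (γ : ℝ → ℂ)
    (hcontₙ : ∀ n, ContinuousOn (γₙ n) (Set.Icc 0 1)) (hcont : ContinuousOn γ (Set.Icc 0 1))
    (hunif : TendstoUniformlyOn γₙ γ atTop (Set.Icc 0 1))
    (σₙ : ℕ → ℝ) (σ : ℝ) (hσₙ : ∀ n, σₙ n ∈ Set.Icc (0 : ℝ) 1) (hσ : σ ∈ Set.Icc (0 : ℝ) 1)
    (hσconv : Tendsto σₙ atTop (nhds σ))
    (ℓ : Set ℂ) (hℓ : IsClosed ℓ) (hnot : γ σ ∉ ℓ) :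
    sInf (insert 1 {t | t ∈ Set.Icc σ 1 ∧ γ t ∈ ℓ}) ≤
      Filter.liminf (fun n => sInf (insert 1 {t | t ∈ Set.Icc (σₙ n) 1 ∧ γₙ n t ∈ ℓ}))
        atTop := by
  set Λ : ℕ → ℝ := fun n => sInf (insert 1 {t | t ∈ Set.Icc (σₙ n) 1 ∧ γₙ n t ∈ ℓ}) with hΛ
  -- each candidate set is bounded below by 0 and contains 1
  have hbdd : ∀ n, BddBelow (insert 1 {t | t ∈ Set.Icc (σₙ n) 1 ∧ γₙ n t ∈ ℓ}) := by
    intro n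
    refine ⟨0, ?_⟩
    rintro x (rfl | ⟨hx, -⟩)
    · exact zero_le_one
    · exact le_trans (hσₙ n).1 hx.1
  have hΛle1 : ∀ n, Λ n ≤ 1 := fun n => csInf_le (hbdd n) (mem_insert _ _)
  have hcobdd : IsCoboundedUnder (· ≥ ·) atTop Λ :=
    isCoboundedUnder_ge_of_le _ hΛle1
  -- bound for the limit set
  have hbddS : BddBelow (insert 1 {t | t ∈ Set.Icc σ 1 ∧ γ t ∈ ℓ}) := by
    refine ⟨0, ?_⟩
    rintro x (rfl | ⟨hx, -⟩)
    · exact zero_le_one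
    · exact le_trans hσ.1 hx.1
  have hLle1 : sInf (insert 1 {t | t ∈ Set.Icc σ 1 ∧ γ t ∈ ℓ}) ≤ 1 :=
    csInf_le hbddS (mem_insert _ _)
  -- suffices to show b ≤ liminf for every b < λ
  refine le_of_forall_lt_imp_le_of_dense ?_
  intro b hb
  refine le_liminf_of_le hcobdd ?_
  rcases lt_or_ge b σ with hbσ | hσb
  · -- b < σ : eventually σₙ > b, and Λ n ≥ min (σₙ n) 1 ≥ b
    have hev : ∀ᶠ n in atTop, b < σₙ n :=
      hσconv.eventually (eventually_gt_nhds hbσ)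
    filter_upwards [hev] with n hn
    refine le_csInf ⟨1, mem_insert _ _⟩ ?_
    rintro x (rfl | ⟨hx, -⟩)
    · exact le_of_lt (lt_of_lt_of_le hb hLle1)
    · exact le_trans hn.le hx.1
  · -- σ ≤ b < λ ≤ 1 : compactness argument
    have hb1 : b < 1 := lt_of_lt_of_le hb hLle1
    rcases ℓ.eq_empty_or_nonempty with rfl | hne
    · filter_upwards with n
      refine le_csInf ⟨1, mem_insert _ _⟩ ?_
      rintro x (rfl | ⟨-, hx⟩)
      · exact le_of_lt (lt_of_lt_of_le hb hLle1)
      · exact absurd hx (notMem_empty _)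
    -- the distance function is continuous and positive on [σ, b]
    have hIcc_sub : Set.Icc σ b ⊆ Set.Icc 0 1 :=
      Set.Icc_subset_Icc hσ.1 hb1.le
    have hdcont : ContinuousOn (fun t => Metric.infDist (γ t) ℓ) (Set.Icc σ b) :=
      (Metric.continuous_infDist_pt ℓ).comp_continuousOn (hcont.mono hIcc_sub)
    obtain ⟨t₀, ht₀, hmin⟩ := (isCompact_Icc).exists_isMinOn
      (Set.nonempty_Icc.2 hσb) hdcont
    have hpos : ∀ t ∈ Set.Icc σ b, γ t ∉ ℓ := by
      intro t ht htℓ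
      have : sInf (insert 1 {t | t ∈ Set.Icc σ 1 ∧ γ t ∈ ℓ}) ≤ t :=
        csInf_le hbddS (Or.inr ⟨⟨ht.1, le_trans ht.2 hb1.le⟩, htℓ⟩)
      exact absurd (lt_of_le_of_lt this (lt_of_le_of_lt ht.2 hb))
        (lt_irrefl _)
    set ε := Metric.infDist (γ t₀) ℓ with hε
    have hεpos : 0 < ε := (hℓ.notMem_iff_infDist_pos hne).1 (hpos t₀ ht₀)
    have hεle : ∀ t ∈ Set.Icc σ b, ε ≤ Metric.infDist (γ t) ℓ := fun t ht => hmin ht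
    -- continuity of γ at σ within [0,1] : find δ
    have hca : ContinuousWithinAt γ (Set.Icc 0 1) σ := hcont σ hσ
    obtain ⟨δ, hδpos, hδ⟩ := Metric.continuousWithinAt_iff.1 hca (ε / 2) (by linarith)
    -- the key bound on [σ - δ, b] ∩ [0,1]
    have hkey : ∀ t ∈ Set.Icc (0:ℝ) 1, σ - δ < t → t ≤ b → ε / 2 ≤ Metric.infDist (γ t) ℓ := by
      intro t ht h1 h2
      rcases le_or_gt σ t with h | h
      · linarith [hεle t ⟨h, h2⟩]
      · have hd : dist t σ < δ := by
          rw [Real.dist_eq, abs_lt]; constructor <;> linarith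
        have := hδ ht hd
        have htri := Metric.infDist_le_infDist_add_dist (x := γ σ) (y := γ t) (s := ℓ)
        have hσε : ε ≤ Metric.infDist (γ σ) ℓ := hεle σ ⟨le_refl _, hσb⟩
        have := dist_comm (γ t) (γ σ) ▸ this
        linarith
    -- uniform convergence: eventually dist < ε/4
    have hevu : ∀ᶠ n in atTop, ∀ t ∈ Set.Icc (0:ℝ) 1, dist (γ t) (γₙ n t) < ε / 4 :=
      Metric.tendstoUniformlyOn_iff.1 hunif (ε / 4) (by linarith)
    have hevσ : ∀ᶠ n in atTop, σ - δ < σₙ n :=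
      hσconv.eventually (eventually_gt_nhds (by linarith))
    filter_upwards [hevu, hevσ] with n hu hσn
    refine le_csInf ⟨1, mem_insert _ _⟩ ?_
    rintro x (rfl | ⟨hx, hxℓ⟩)
    · exact hb1.le
    · by_contra hxb
      push_neg at hxb
      have hx01 : x ∈ Set.Icc (0:ℝ) 1 := ⟨le_trans (hσₙ n).1 hx.1, hx.2⟩
      have h1 : ε / 2 ≤ Metric.infDist (γ x) ℓ :=
        hkey x hx01 (lt_of_lt_of_le hσn hx.1) (le_of_lt hxb)
      have h2 : dist (γ x) (γₙ n x) < ε / 4 := hu x hx01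
      have htri := Metric.infDist_le_infDist_add_dist (x := γ x) (y := γₙ n x) (s := ℓ)
      have h0 : Metric.infDist (γₙ n x) ℓ = 0 :=
        (hℓ.mem_iff_infDist_zero hne).1 hxℓ
      rw [h0] at htri
      linarith
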